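/- Assume moreover ρ < 1/2. For every natural number k, if ρ^{k+1}·(1/2 − ρ) ≤ ε < ρ^k·(1/2 − ρ), then the closed ε-neighborhood S_ε has exactly 3^{k+1} connected components. -/

import Mathlib

open Metric Set Bornology

/-- The vertices of the unit equilateral triangle. -/
noncomputable def v0 : EuclideanSpace ℝ (Fin 2) :=
  (WithLp.equiv 2 (Fin 2 → ℝ)).symm ![0, 0]

noncomputable def v1 : EuclideanSpace ℝ (Fin 2) :=
  (WithLp.equiv 2 (Fin 2 → ℝ)).symm ![1, 0]

noncomputable def v2 : EuclideanSpace ℝ (Fin 2) :=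
  (WithLp.equiv 2 (Fin 2 → ℝ)).symm ![1 / 2, Real.sqrt 3 / 2]

/-- The homothety with center `v0` (resp. `v1`, `v2`) and ratio `ρ`. -/
noncomputable def f0 (ρ : ℝ) (x : EuclideanSpace ℝ (Fin 2)) : EuclideanSpace ℝ (Fin 2) :=
  v0 + ρ • (x - v0)

noncomputable def f1 (ρ : ℝ) (x : EuclideanSpace ℝ (Fin 2)) : EuclideanSpace ℝ (Fin 2) :=
  v1 + ρ • (x - v1)

noncomputable def f2 (ρ : ℝ) (x : EuclideanSpace ℝ (Fin 2)) : EuclideanSpace ℝ (Fin 2) :=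
  v2 + ρ • (x - v2)

/-- The union of the images of a set under the three homotheties. -/
noncomputable def sierpPhi (ρ : ℝ) (X : Set (EuclideanSpace ℝ (Fin 2))) :
    Set (EuclideanSpace ℝ (Fin 2)) :=
  f0 ρ '' X ∪ f1 ρ '' X ∪ f2 ρ '' X

/-- The filled equilateral triangle. -/
noncomputable def sierpT : Set (EuclideanSpace ℝ (Fin 2)) :=
  convexHull ℝ {v0, v1, v2}

/-- The generalized Sierpinski triangle with contraction ratio `ρ`. -/
noncomputable def sierpinski (ρ : ℝ) : Set (EuclideanSpace ℝ (Fin 2)) :=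
  ⋂ k : ℕ, (sierpPhi ρ)^[k] sierpT

abbrev EE := EuclideanSpace ℝ (Fin 2)


@[simp] lemma v0_0 : v0 0 = 0 := rfl
@[simp] lemma v0_1 : v0 1 = 0 := rfl
@[simp] lemma v1_0 : v1 0 = 1 := rfl
@[simp] lemma v1_1 : v1 1 = 0 := rfl
@[simp] lemma v2_0 : v2 0 = 1 / 2 := rfl
@[simp] lemma v2_1 : v2 1 = Real.sqrt 3 / 2 := rfl

lemma dist_coord (x y : EE) :
    dist x y = Real.sqrt ((x 0 - y 0) ^ 2 + (x 1 - y 1) ^ 2) := by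
  rw [EuclideanSpace.dist_eq, Fin.sum_univ_two]
  simp [Real.dist_eq, sq_abs]

lemma abs_le_dist (a b : ℝ) (hab : a ^ 2 + b ^ 2 = 1) (x y : EE) :
    |a * (x 0 - y 0) + b * (x 1 - y 1)| ≤ dist x y := by
  rw [dist_coord]
  rw [show ((x 0 - y 0) ^ 2 + (x 1 - y 1) ^ 2)
      = ((x 0 - y 0) ^ 2 + (x 1 - y 1) ^ 2) from rfl]
  have h1 : (a * (x 0 - y 0) + b * (x 1 - y 1)) ^ 2
      ≤ (x 0 - y 0) ^ 2 + (x 1 - y 1) ^ 2 := by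
    nlinarith [sq_nonneg (a * (x 1 - y 1) - b * (x 0 - y 0)), sq_nonneg (x 0 - y 0),
      sq_nonneg (x 1 - y 1)]
  calc |a * (x 0 - y 0) + b * (x 1 - y 1)|
      = Real.sqrt ((a * (x 0 - y 0) + b * (x 1 - y 1)) ^ 2) := (Real.sqrt_sq_eq_abs _).symm
    _ ≤ _ := Real.sqrt_le_sqrt h1


-- halfspace bound over T
lemma T_bound (a b lo hi : ℝ)
    (h0 : a * v0 0 + b * v0 1 ∈ Icc lo hi)
    (h1 : a * v1 0 + b * v1 1 ∈ Icc lo hi)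
    (h2 : a * v2 0 + b * v2 1 ∈ Icc lo hi) :
    ∀ x ∈ sierpT, a * x 0 + b * x 1 ∈ Icc lo hi := by
  have hconv : Convex ℝ {x : EE | a * x 0 + b * x 1 ∈ Icc lo hi} := by
    intro x hx y hy s t hs ht hst
    have hx' : a * x 0 + b * x 1 ∈ Icc lo hi := hx
    have hy' : a * y 0 + b * y 1 ∈ Icc lo hi := hy
    have e0 : (s • x + t • y) 0 = s * x 0 + t * y 0 := rfl
    have e1 : (s • x + t • y) 1 = s * x 1 + t * y 1 := rfl
    have := (convex_Icc lo hi) hx' hy' hs ht hst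
    simp only [mem_setOf_eq, e0, e1, smul_eq_mul] at *
    convert this using 1
    ring
  intro x hx
  have : sierpT ⊆ {x : EE | a * x 0 + b * x 1 ∈ Icc lo hi} := by
    apply convexHull_min _ hconv
    intro y hy
    rcases hy with h | h | h <;> subst h <;> assumption
  exact this hx

lemma sqrt3_sq : Real.sqrt 3 ^ 2 = 3 := Real.sq_sqrt (by norm_num)
lemma sqrt3_pos : 0 < Real.sqrt 3 := Real.sqrt_pos.mpr (by norm_num)

lemma T_x0 : ∀ x ∈ sierpT, x 0 ∈ Icc (0:ℝ) 1 := by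
  have := T_bound 1 0 0 1 (by norm_num) (by norm_num) (by norm_num)
  intro x hx; have h := this x hx; simpa using h

lemma T_L2 : ∀ x ∈ sierpT, (1/2) * x 0 + (Real.sqrt 3 / 2) * x 1 ∈ Icc (0:ℝ) 1 := by
  apply T_bound <;> simp [mem_Icc] <;>
    first
      | nlinarith [sqrt3_sq, sqrt3_pos]
      | exact ⟨by nlinarith [sqrt3_sq, sqrt3_pos], by nlinarith [sqrt3_sq, sqrt3_pos]⟩

lemma T_L3 : ∀ x ∈ sierpT, (-(1/2)) * x 0 + (Real.sqrt 3 / 2) * x 1 ∈ Icc (-(1/2):ℝ) (1/2) := by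
  apply T_bound <;> simp [mem_Icc] <;>
    first
      | nlinarith [sqrt3_sq, sqrt3_pos]
      | exact ⟨by nlinarith [sqrt3_sq, sqrt3_pos], by nlinarith [sqrt3_sq, sqrt3_pos]⟩


noncomputable def hmt (c : EE) (ρ : ℝ) (x : EE) : EE := c + ρ • (x - c)

variable {c : EE} {ρ : ℝ}

lemma hmt_dist (hρ : 0 ≤ ρ) (x y : EE) : dist (hmt c ρ x) (hmt c ρ y) = ρ * dist x y := by
  simp only [hmt, dist_eq_norm]
  have : c + ρ • (x - c) - (c + ρ • (y - c)) = ρ • (x - y) := by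
    module
  rw [this, norm_smul, Real.norm_eq_abs, abs_of_nonneg hρ]

lemma hmt_comp_inv (hρ : ρ ≠ 0) (z : EE) : hmt c ρ (hmt c ρ⁻¹ z) = z := by
  simp only [hmt, add_sub_cancel_left, smul_smul, mul_inv_cancel₀ hρ, one_smul]
  abel

lemma hmt_inv_comp (hρ : ρ ≠ 0) (z : EE) : hmt c ρ⁻¹ (hmt c ρ z) = z := by
  simp only [hmt, add_sub_cancel_left, smul_smul, inv_mul_cancel₀ hρ, one_smul]
  abel

noncomputable def hmtHomeo (c : EE) (ρ : ℝ) (hρ : 0 < ρ) : EE ≃ₜ EE where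
  toFun := hmt c ρ
  invFun := hmt c ρ⁻¹
  left_inv x := hmt_inv_comp hρ.ne' x
  right_inv x := hmt_comp_inv hρ.ne' x
  continuous_toFun := by
    apply Continuous.add continuous_const
    exact ((continuous_id.sub continuous_const).const_smul ρ)
  continuous_invFun := by
    apply Continuous.add continuous_const
    exact ((continuous_id.sub continuous_const).const_smul ρ⁻¹)

lemma hmt_image_closedBall (hρ : 0 < ρ) (x : EE) (r : ℝ) :
    hmt c ρ '' closedBall x r = closedBall (hmt c ρ x) (ρ * r) := by
  ext z
  constructor
  · rintro ⟨w, hw, rfl⟩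
    rw [mem_closedBall] at *
    rw [hmt_dist hρ.le]
    exact mul_le_mul_of_nonneg_left hw hρ.le
  · intro hz
    refine ⟨hmt c ρ⁻¹ z, ?_, hmt_comp_inv hρ.ne' z⟩
    rw [mem_closedBall] at *
    have h2 : dist (hmt c ρ (hmt c ρ⁻¹ z)) (hmt c ρ x) = ρ * dist (hmt c ρ⁻¹ z) x :=
      hmt_dist hρ.le _ _
    rw [hmt_comp_inv hρ.ne' z] at h2
    nlinarith [dist_nonneg (x := z) (y := hmt c ρ x)]

lemma hmt_cthickening (hρ : 0 < ρ) {X : Set EE} (hX : IsCompact X) {δ : ℝ} (hδ : 0 ≤ δ) :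
    cthickening δ (hmt c ρ '' X) = hmt c ρ '' cthickening (δ / ρ) X := by
  have hδρ : 0 ≤ δ / ρ := div_nonneg hδ hρ.le
  have hcont : Continuous (hmt c ρ) := (hmtHomeo c ρ hρ).continuous
  rw [(hX.image hcont).cthickening_eq_biUnion_closedBall hδ,
    hX.cthickening_eq_biUnion_closedBall hδρ]
  rw [image_iUnion₂]
  rw [biUnion_image]
  apply iUnion₂_congr
  intro x hx
  rw [hmt_image_closedBall hρ]
  congr 1
  field_simp
section DChunk
variable {ρ : ℝ}

lemma f0_eq : f0 ρ = hmt v0 ρ := rfl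
lemma f1_eq : f1 ρ = hmt v1 ρ := rfl
lemma f2_eq : f2 ρ = hmt v2 ρ := rfl

lemma v0_mem_T : v0 ∈ sierpT := subset_convexHull ℝ _ (by simp)
lemma v1_mem_T : v1 ∈ sierpT := subset_convexHull ℝ _ (by simp)
lemma v2_mem_T : v2 ∈ sierpT := subset_convexHull ℝ _ (by simp)

lemma convex_T : Convex ℝ sierpT := convex_convexHull ℝ _

lemma hmt_self (c : EE) : hmt c ρ c = c := by simp [hmt]

lemma hmt_mem_T {c : EE} (hc : c ∈ sierpT) (hρ0 : 0 ≤ ρ) (hρ1 : ρ ≤ 1) {x : EE}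
    (hx : x ∈ sierpT) : hmt c ρ x ∈ sierpT := by
  have h : hmt c ρ x = (1 - ρ) • c + ρ • x := by simp only [hmt]; module
  rw [h]
  exact convex_T hc hx (by linarith) hρ0 (by ring)

/-- the `k`-th approximation -/
noncomputable def AA (ρ : ℝ) (k : ℕ) : Set EE := (sierpPhi ρ)^[k] sierpT

lemma AA_zero : AA ρ 0 = sierpT := rfl
lemma AA_succ (k : ℕ) : AA ρ (k + 1) = sierpPhi ρ (AA ρ k) :=
  Function.iterate_succ_apply' _ _ _

lemma phi_mono {X Y : Set EE} (h : X ⊆ Y) : sierpPhi ρ X ⊆ sierpPhi ρ Y := by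
  unfold sierpPhi
  gcongr <;> exact Set.image_subset _ h

lemma phi_T_subset (hρ0 : 0 ≤ ρ) (hρ1 : ρ ≤ 1) : sierpPhi ρ sierpT ⊆ sierpT := by
  unfold sierpPhi
  rw [f0_eq, f1_eq, f2_eq]
  refine Set.union_subset (Set.union_subset ?_ ?_) ?_ <;>
    rintro y ⟨x, hx, rfl⟩
  · exact hmt_mem_T v0_mem_T hρ0 hρ1 hx
  · exact hmt_mem_T v1_mem_T hρ0 hρ1 hx
  · exact hmt_mem_T v2_mem_T hρ0 hρ1 hx

lemma AA_succ_subset (hρ0 : 0 ≤ ρ) (hρ1 : ρ ≤ 1) (k : ℕ) : AA ρ (k + 1) ⊆ AA ρ k := by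
  induction k with
  | zero => rw [AA_succ, AA_zero]; exact phi_T_subset hρ0 hρ1
  | succ n ih =>
    have h2 := phi_mono (ρ := ρ) ih
    rwa [← AA_succ (k := n + 1), ← AA_succ (k := n)] at h2

lemma AA_mono (hρ0 : 0 ≤ ρ) (hρ1 : ρ ≤ 1) {k l : ℕ} (h : k ≤ l) : AA ρ l ⊆ AA ρ k := by
  induction l with
  | zero => simp_all
  | succ n ih =>
    rcases Nat.lt_or_ge k (n+1) with h' | h'
    · exact (AA_succ_subset hρ0 hρ1 n).trans (ih (Nat.lt_succ_iff.mp h'))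
    · have : k = n + 1 := le_antisymm h h'
      subst this; rfl

lemma T_compact : IsCompact sierpT := by
  apply Set.Finite.isCompact_convexHull
  exact (Set.finite_singleton v2).insert v1 |>.insert v0

lemma AA_compact (hρ0 : 0 < ρ) (k : ℕ) : IsCompact (AA ρ k) := by
  induction k with
  | zero => exact T_compact
  | succ n ih =>
    rw [AA_succ]
    unfold sierpPhi
    rw [f0_eq, f1_eq, f2_eq]
    exact ((ih.image (hmtHomeo v0 ρ hρ0).continuous).union
      (ih.image (hmtHomeo v1 ρ hρ0).continuous)).union
      (ih.image (hmtHomeo v2 ρ hρ0).continuous)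

lemma S_subset_AA (k : ℕ) : sierpinski ρ ⊆ AA ρ k := Set.iInter_subset _ k

lemma S_subset_T : sierpinski ρ ⊆ sierpT := S_subset_AA 0

lemma S_closed (hρ0 : 0 < ρ) : IsClosed (sierpinski ρ) :=
  isClosed_iInter fun k => (AA_compact hρ0 k).isClosed

lemma S_compact (hρ0 : 0 < ρ) : IsCompact (sierpinski ρ) :=
  (T_compact.of_isClosed_subset (S_closed hρ0) S_subset_T)

lemma v0_mem_S : v0 ∈ sierpinski ρ := by
  have hall : ∀ k, v0 ∈ AA ρ k := by
    intro k
    induction k with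
    | zero => exact v0_mem_T
    | succ n ih =>
      rw [AA_succ (ρ := ρ) (k := n)]
      exact Set.mem_union_left _ (Set.mem_union_left _ ⟨v0, ih, by rw [f0_eq, hmt_self]⟩)
  exact Set.mem_iInter.mpr hall

lemma S_nonempty : (sierpinski ρ).Nonempty := ⟨v0, v0_mem_S⟩

lemma phi_S_subset (hρ0 : 0 ≤ ρ) (hρ1 : ρ ≤ 1) :
    sierpPhi ρ (sierpinski ρ) ⊆ sierpinski ρ := by
  have hall : ∀ k, sierpPhi ρ (sierpinski ρ) ⊆ AA ρ k := by
    intro k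
    cases k with
    | zero => exact (phi_mono S_subset_T).trans (phi_T_subset hρ0 hρ1)
    | succ n =>
      rw [AA_succ]
      exact phi_mono (S_subset_AA n)
  exact Set.subset_iInter hall

lemma mem_image_S_of_infinite {c : EE} (hρ0 : 0 < ρ) (hρ1 : ρ ≤ 1) {x : EE} {K : Set ℕ}
    (hK : K.Infinite) (hmem : ∀ k ∈ K, x ∈ hmt c ρ '' AA ρ k) :
    x ∈ hmt c ρ '' sierpinski ρ := by
  have hall : ∀ k, x ∈ hmt c ρ '' AA ρ k := by
    intro k
    obtain ⟨m, hmK, hkm⟩ := hK.exists_gt k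
    exact Set.image_mono (AA_mono hρ0.le hρ1 hkm.le) (hmem m hmK)
  have : x ∈ ⋂ k, hmt c ρ '' AA ρ k := Set.mem_iInter.mpr hall
  have hbij : Function.Bijective (hmt c ρ) := (hmtHomeo c ρ hρ0).bijective
  rwa [← Set.image_iInter hbij] at this

lemma S_subset_phi (hρ0 : 0 < ρ) (hρ1 : ρ ≤ 1) :
    sierpinski ρ ⊆ sierpPhi ρ (sierpinski ρ) := by
  intro x hx
  set K0 : Set ℕ := {k | x ∈ hmt v0 ρ '' AA ρ k} with hK0
  set K1 : Set ℕ := {k | x ∈ hmt v1 ρ '' AA ρ k} with hK1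
  set K2 : Set ℕ := {k | x ∈ hmt v2 ρ '' AA ρ k} with hK2
  have hcover : ∀ k : ℕ, k ∈ K0 ∪ K1 ∪ K2 := by
    intro k
    have : x ∈ AA ρ (k + 1) := Set.mem_iInter.mp hx (k + 1)
    rw [AA_succ] at this
    unfold sierpPhi at this
    rw [f0_eq, f1_eq, f2_eq] at this
    exact this
  have huniv : K0 ∪ K1 ∪ K2 = Set.univ := Set.eq_univ_of_forall hcover
  have hinf : (K0 ∪ K1 ∪ K2).Infinite := by rw [huniv]; exact Set.infinite_univ
  have : K0.Infinite ∨ K1.Infinite ∨ K2.Infinite := by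
    by_contra h
    push_neg at h
    exact hinf ((h.1.union h.2.1).union h.2.2)
  unfold sierpPhi
  rw [f0_eq, f1_eq, f2_eq]
  rcases this with h | h | h
  · exact Set.mem_union_left _ (Set.mem_union_left _
      (mem_image_S_of_infinite hρ0 hρ1 h (fun k hk => hk)))
  · exact Set.mem_union_left _ (Set.mem_union_right _
      (mem_image_S_of_infinite hρ0 hρ1 h (fun k hk => hk)))
  · exact Set.mem_union_right _ (mem_image_S_of_infinite hρ0 hρ1 h (fun k hk => hk))

lemma phi_S_eq (hρ0 : 0 < ρ) (hρ1 : ρ ≤ 1) :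
    sierpPhi ρ (sierpinski ρ) = sierpinski ρ :=
  le_antisymm (phi_S_subset hρ0.le hρ1) (S_subset_phi hρ0 hρ1)

end DChunk
section EChunk
variable {ρ : ℝ}

lemma hmt_apply (c : EE) (x : EE) (j : Fin 2) :
    hmt c ρ x j = c j + ρ * (x j - c j) := rfl

lemma v1_mem_S : v1 ∈ sierpinski ρ := by
  have hall : ∀ k, v1 ∈ AA ρ k := by
    intro k
    induction k with
    | zero => exact v1_mem_T
    | succ n ih =>
      rw [AA_succ (ρ := ρ) (k := n)]
      exact Set.mem_union_left _ (Set.mem_union_right _ ⟨v1, ih, by rw [f1_eq, hmt_self]⟩)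
  exact Set.mem_iInter.mpr hall

lemma v2_mem_S : v2 ∈ sierpinski ρ := by
  have hall : ∀ k, v2 ∈ AA ρ k := by
    intro k
    induction k with
    | zero => exact v2_mem_T
    | succ n ih =>
      rw [AA_succ (ρ := ρ) (k := n)]
      exact Set.mem_union_right _ ⟨v2, ih, by rw [f2_eq, hmt_self]⟩
  exact Set.mem_iInter.mpr hall

lemma sep01 (hρ0 : 0 ≤ ρ) : ∀ p ∈ hmt v0 ρ '' sierpT, ∀ q ∈ hmt v1 ρ '' sierpT,
    1 - 2 * ρ ≤ dist p q := by
  rintro p ⟨x, hx, rfl⟩ q ⟨y, hy, rfl⟩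
  have hx0 := T_x0 x hx
  have hy0 := T_x0 y hy
  rw [Set.mem_Icc] at hx0 hy0
  have h := abs_le_dist 1 0 (by norm_num) (hmt v0 ρ x) (hmt v1 ρ y)
  obtain ⟨hlo, hhi⟩ := abs_le.mp h
  simp only [hmt_apply, v0_0, v0_1, v1_0, v1_1] at hlo hhi
  nlinarith [mul_nonneg hρ0 hy0.1, mul_le_mul_of_nonneg_left hx0.2 hρ0]

lemma sep02 (hρ0 : 0 ≤ ρ) : ∀ p ∈ hmt v0 ρ '' sierpT, ∀ q ∈ hmt v2 ρ '' sierpT,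
    1 - 2 * ρ ≤ dist p q := by
  rintro p ⟨x, hx, rfl⟩ q ⟨y, hy, rfl⟩
  have hx0 := T_L2 x hx
  have hy0 := T_L2 y hy
  rw [Set.mem_Icc] at hx0 hy0
  have h := abs_le_dist (1/2) (Real.sqrt 3 / 2)
    (by nlinarith [sqrt3_sq]) (hmt v0 ρ x) (hmt v2 ρ y)
  obtain ⟨hlo, hhi⟩ := abs_le.mp h
  simp only [hmt_apply, v0_0, v0_1, v2_0, v2_1] at hlo hhi
  nlinarith [sqrt3_sq, mul_nonneg hρ0 hy0.1, mul_le_mul_of_nonneg_left hx0.2 hρ0,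
    mul_nonneg hρ0 hx0.1, mul_le_mul_of_nonneg_left hy0.2 hρ0]

lemma sep12 (hρ0 : 0 ≤ ρ) : ∀ p ∈ hmt v1 ρ '' sierpT, ∀ q ∈ hmt v2 ρ '' sierpT,
    1 - 2 * ρ ≤ dist p q := by
  rintro p ⟨x, hx, rfl⟩ q ⟨y, hy, rfl⟩
  have hx0 := T_L3 x hx
  have hy0 := T_L3 y hy
  rw [Set.mem_Icc] at hx0 hy0
  have h := abs_le_dist (-(1/2)) (Real.sqrt 3 / 2)
    (by nlinarith [sqrt3_sq]) (hmt v1 ρ x) (hmt v2 ρ y)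
  obtain ⟨hlo, hhi⟩ := abs_le.mp h
  simp only [hmt_apply, v1_0, v1_1, v2_0, v2_1] at hlo hhi
  nlinarith [sqrt3_sq, mul_le_mul_of_nonneg_left hy0.1 hρ0,
    mul_le_mul_of_nonneg_left hx0.2 hρ0,
    mul_le_mul_of_nonneg_left hx0.1 hρ0, mul_le_mul_of_nonneg_left hy0.2 hρ0]

end EChunk
section FChunk
variable {ρ : ℝ}

lemma cthick_S_decomp (hρ0 : 0 < ρ) (hρ1 : ρ ≤ 1) (δ : ℝ) :
    cthickening δ (sierpinski ρ) =
      cthickening δ (hmt v0 ρ '' sierpinski ρ) ∪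
      cthickening δ (hmt v1 ρ '' sierpinski ρ) ∪
      cthickening δ (hmt v2 ρ '' sierpinski ρ) := by
  conv_lhs => rw [← phi_S_eq hρ0 hρ1]
  unfold sierpPhi
  rw [f0_eq, f1_eq, f2_eq, cthickening_union, cthickening_union]

lemma disjoint_cthick_of_sep {P Q : Set EE} (hP : IsCompact P) (hQ : IsCompact Q)
    {δ d : ℝ} (hδ : 0 ≤ δ) (hd : ∀ p ∈ P, ∀ q ∈ Q, d ≤ dist p q) (h2 : 2 * δ < d) :
    Disjoint (cthickening δ P) (cthickening δ Q) := by
  rw [Set.disjoint_left]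
  intro z hzP hzQ
  rw [hP.cthickening_eq_biUnion_closedBall hδ] at hzP
  rw [hQ.cthickening_eq_biUnion_closedBall hδ] at hzQ
  obtain ⟨p, hp, hzp⟩ := Set.mem_iUnion₂.mp hzP
  obtain ⟨q, hq, hzq⟩ := Set.mem_iUnion₂.mp hzQ
  rw [mem_closedBall] at hzp hzq
  have := hd p hp q hq
  have htri := dist_triangle p z q
  rw [dist_comm z p] at hzp
  linarith

noncomputable def m01 : EE := (WithLp.equiv 2 (Fin 2 → ℝ)).symm ![1 / 2, 0]
noncomputable def m02 : EE := (WithLp.equiv 2 (Fin 2 → ℝ)).symm ![1 / 4, Real.sqrt 3 / 4]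

@[simp] lemma m01_0 : m01 0 = 1 / 2 := rfl
@[simp] lemma m01_1 : m01 1 = 0 := rfl
@[simp] lemma m02_0 : m02 0 = 1 / 4 := rfl
@[simp] lemma m02_1 : m02 1 = Real.sqrt 3 / 4 := rfl

lemma dist_m01_f0 (hρ2 : ρ ≤ 1 / 2) : dist m01 (hmt v0 ρ v1) = 1 / 2 - ρ := by
  rw [dist_coord]
  have h : (m01 0 - hmt v0 ρ v1 0) ^ 2 + (m01 1 - hmt v0 ρ v1 1) ^ 2 = (1 / 2 - ρ) ^ 2 := by
    simp only [hmt_apply, m01_0, m01_1, v0_0, v0_1, v1_0, v1_1]; ring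
  rw [h, Real.sqrt_sq (by linarith)]

lemma dist_m01_f1 (hρ2 : ρ ≤ 1 / 2) : dist m01 (hmt v1 ρ v0) = 1 / 2 - ρ := by
  rw [dist_coord]
  have h : (m01 0 - hmt v1 ρ v0 0) ^ 2 + (m01 1 - hmt v1 ρ v0 1) ^ 2 = (1 / 2 - ρ) ^ 2 := by
    simp only [hmt_apply, m01_0, m01_1, v0_0, v0_1, v1_0, v1_1]; ring
  rw [h, Real.sqrt_sq (by linarith)]

lemma dist_m02_f0 (hρ2 : ρ ≤ 1 / 2) : dist m02 (hmt v0 ρ v2) = 1 / 2 - ρ := by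
  rw [dist_coord]
  have h : (m02 0 - hmt v0 ρ v2 0) ^ 2 + (m02 1 - hmt v0 ρ v2 1) ^ 2 = (1 / 2 - ρ) ^ 2 := by
    simp only [hmt_apply, m02_0, m02_1, v0_0, v0_1, v2_0, v2_1]
    linear_combination (1 / 4 - ρ / 2) ^ 2 * sqrt3_sq
  rw [h, Real.sqrt_sq (by linarith)]

lemma dist_m02_f2 (hρ2 : ρ ≤ 1 / 2) : dist m02 (hmt v2 ρ v0) = 1 / 2 - ρ := by
  rw [dist_coord]
  have h : (m02 0 - hmt v2 ρ v0 0) ^ 2 + (m02 1 - hmt v2 ρ v0 1) ^ 2 = (1 / 2 - ρ) ^ 2 := by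
    simp only [hmt_apply, m02_0, m02_1, v0_0, v0_1, v2_0, v2_1]
    linear_combination ((ρ - 1 / 2) / 2) ^ 2 * sqrt3_sq
  rw [h, Real.sqrt_sq (by linarith)]

lemma dist_v1_v0 : dist v1 v0 = 1 := by
  rw [dist_coord]
  norm_num

lemma dist_v2_v0 : dist v2 v0 = 1 := by
  rw [dist_coord]
  have h : (v2 0 - v0 0) ^ 2 + (v2 1 - v0 1) ^ 2 = 1 := by
    simp only [v2_0, v2_1, v0_0, v0_1]
    linear_combination (1 / 4 : ℝ) * sqrt3_sq
  rw [h, Real.sqrt_one]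

lemma T_subset_ball : sierpT ⊆ closedBall v0 1 := by
  apply convexHull_min _ (convex_closedBall v0 1)
  rintro y (rfl | rfl | rfl)
  · simp
  · rw [mem_closedBall, dist_v1_v0]
  · rw [mem_closedBall, dist_v2_v0]

lemma conn_aux (hρ0 : 0 < ρ) (hρ2 : ρ ≤ 1 / 2) :
    ∀ n : ℕ, ∀ δ : ℝ, 1 / 2 - ρ ≤ δ → ρ ^ n ≤ δ →
      IsPreconnected (cthickening δ (sierpinski ρ)) := by
  intro n
  induction n with
  | zero =>
    intro δ hδ1 hδ2
    simp only [pow_zero] at hδ2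
    have hδ0 : (0 : ℝ) ≤ δ := by linarith
    rw [(S_compact hρ0).cthickening_eq_biUnion_closedBall hδ0, ← Set.sUnion_image]
    apply isPreconnected_sUnion v0
    · rintro t ⟨x, hx, rfl⟩
      rw [mem_closedBall, dist_comm]
      calc dist x v0 ≤ 1 := by
            have := T_subset_ball (S_subset_T hx); rwa [mem_closedBall] at this
        _ ≤ δ := hδ2
    · rintro t ⟨x, hx, rfl⟩
      exact (convex_closedBall x δ).isPreconnected
  | succ n ih =>
    intro δ hδ1 hδ2
    have hδ0 : (0 : ℝ) ≤ δ := by linarith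
    have hρ1 : ρ ≤ 1 := by linarith
    set Y := cthickening (δ / ρ) (sierpinski ρ) with hY
    have hYc : IsPreconnected Y := by
      apply ih
      · calc (1 : ℝ) / 2 - ρ ≤ δ := hδ1
          _ ≤ δ / ρ := by
            rw [le_div_iff₀ hρ0]
            nlinarith
      · rw [le_div_iff₀ hρ0]
        calc ρ ^ n * ρ = ρ ^ (n + 1) := by ring
          _ ≤ δ := hδ2
    have e0 : cthickening δ (hmt v0 ρ '' sierpinski ρ) = hmt v0 ρ '' Y :=
      hmt_cthickening hρ0 (S_compact hρ0) hδ0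
    have e1 : cthickening δ (hmt v1 ρ '' sierpinski ρ) = hmt v1 ρ '' Y :=
      hmt_cthickening hρ0 (S_compact hρ0) hδ0
    have e2 : cthickening δ (hmt v2 ρ '' sierpinski ρ) = hmt v2 ρ '' Y :=
      hmt_cthickening hρ0 (S_compact hρ0) hδ0
    have hc0 : IsPreconnected (cthickening δ (hmt v0 ρ '' sierpinski ρ)) := by
      rw [e0]; exact hYc.image _ (hmtHomeo v0 ρ hρ0).continuous.continuousOn
    have hc1 : IsPreconnected (cthickening δ (hmt v1 ρ '' sierpinski ρ)) := by
      rw [e1]; exact hYc.image _ (hmtHomeo v1 ρ hρ0).continuous.continuousOn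
    have hc2 : IsPreconnected (cthickening δ (hmt v2 ρ '' sierpinski ρ)) := by
      rw [e2]; exact hYc.image _ (hmtHomeo v2 ρ hρ0).continuous.continuousOn
    have hm01a : m01 ∈ cthickening δ (hmt v0 ρ '' sierpinski ρ) :=
      mem_cthickening_of_dist_le m01 (hmt v0 ρ v1) δ _ ⟨v1, v1_mem_S, rfl⟩
        (by rw [dist_m01_f0 hρ2]; linarith)
    have hm01b : m01 ∈ cthickening δ (hmt v1 ρ '' sierpinski ρ) :=
      mem_cthickening_of_dist_le m01 (hmt v1 ρ v0) δ _ ⟨v0, v0_mem_S, rfl⟩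
        (by rw [dist_m01_f1 hρ2]; linarith)
    have hm02a : m02 ∈ cthickening δ (hmt v0 ρ '' sierpinski ρ) :=
      mem_cthickening_of_dist_le m02 (hmt v0 ρ v2) δ _ ⟨v2, v2_mem_S, rfl⟩
        (by rw [dist_m02_f0 hρ2]; linarith)
    have hm02b : m02 ∈ cthickening δ (hmt v2 ρ '' sierpinski ρ) :=
      mem_cthickening_of_dist_le m02 (hmt v2 ρ v0) δ _ ⟨v0, v0_mem_S, rfl⟩
        (by rw [dist_m02_f2 hρ2]; linarith)
    rw [cthick_S_decomp hρ0 hρ1]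
    exact IsPreconnected.union m02 (Set.mem_union_left _ hm02a) hm02b
      (IsPreconnected.union m01 hm01a hm01b hc0 hc1) hc2

end FChunk

section GChunk
variable {ρ : ℝ}

/-- The set of connected components of `X`. -/
def compSet (X : Set EE) : Set (Set EE) :=
  {C | ∃ p ∈ X, C = connectedComponentIn X p}

lemma compSet_nonempty_subset {X C : Set EE} (h : C ∈ compSet X) : C.Nonempty ∧ C ⊆ X := by
  obtain ⟨p, hp, rfl⟩ := h
  exact ⟨⟨p, mem_connectedComponentIn hp⟩, connectedComponentIn_subset _ _⟩

lemma clopen_pair {A B : Set EE} (hA : IsClosed A) (hB : IsClosed B) (hd : Disjoint A B)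
    {p : EE} (hp : p ∈ A) : connectedComponentIn (A ∪ B) p = connectedComponentIn A p := by
  set C := connectedComponentIn (A ∪ B) p with hC
  have hCpre : IsPreconnected C := isPreconnected_connectedComponentIn
  have hCX : C ⊆ A ∪ B := connectedComponentIn_subset _ _
  have hpC : p ∈ C := mem_connectedComponentIn (Set.mem_union_left _ hp)
  have hCA : C ⊆ A := by
    by_contra hnot
    obtain ⟨x, hxC, hxA⟩ := Set.not_subset.mp hnot
    have hsub : C ⊆ Bᶜ ∪ Aᶜ := by
      intro y hy
      rcases hCX hy with h | h
      · exact Or.inl (fun hyB => Set.disjoint_left.mp hd h hyB)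
      · exact Or.inr (fun hyA => Set.disjoint_left.mp hd hyA h)
    have hne1 : (C ∩ Bᶜ).Nonempty :=
      ⟨p, hpC, fun hpB => Set.disjoint_left.mp hd hp hpB⟩
    have hne2 : (C ∩ Aᶜ).Nonempty := ⟨x, hxC, hxA⟩
    obtain ⟨z, hzC, hzB, hzA⟩ := hCpre Bᶜ Aᶜ hB.isOpen_compl hA.isOpen_compl hsub hne1 hne2
    rcases hCX hzC with h | h
    · exact hzA h
    · exact hzB h
  apply le_antisymm
  · exact hCpre.subset_connectedComponentIn hpC hCA
  · exact connectedComponentIn_mono p Set.subset_union_left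

lemma compSet_union {A B : Set EE} (hA : IsClosed A) (hB : IsClosed B) (hd : Disjoint A B) :
    compSet (A ∪ B) = compSet A ∪ compSet B := by
  ext C
  constructor
  · rintro ⟨p, hp, rfl⟩
    rcases hp with hp | hp
    · exact Or.inl ⟨p, hp, clopen_pair hA hB hd hp⟩
    · refine Or.inr ⟨p, hp, ?_⟩
      rw [Set.union_comm]
      exact clopen_pair hB hA hd.symm hp
  · rintro (⟨p, hp, rfl⟩ | ⟨p, hp, rfl⟩)
    · exact ⟨p, Set.mem_union_left _ hp, (clopen_pair hA hB hd hp).symm⟩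
    · refine ⟨p, Set.mem_union_right _ hp, ?_⟩
      rw [Set.union_comm]
      exact (clopen_pair hB hA hd.symm hp).symm

lemma compSet_disjoint {A B : Set EE} (hd : Disjoint A B) :
    Disjoint (compSet A) (compSet B) := by
  rw [Set.disjoint_left]
  intro C hCA hCB
  obtain ⟨hne, hsubA⟩ := compSet_nonempty_subset hCA
  obtain ⟨_, hsubB⟩ := compSet_nonempty_subset hCB
  obtain ⟨x, hx⟩ := hne
  exact Set.disjoint_left.mp hd (hsubA hx) (hsubB hx)

lemma compSet_image (e : EE ≃ₜ EE) (Y : Set EE) :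
    compSet (⇑e '' Y) = (Set.image ⇑e) '' compSet Y := by
  ext C
  constructor
  · rintro ⟨q, ⟨p, hp, rfl⟩, rfl⟩
    exact ⟨connectedComponentIn Y p, ⟨p, hp, rfl⟩, (e.image_connectedComponentIn hp)⟩
  · rintro ⟨D, ⟨p, hp, rfl⟩, rfl⟩
    exact ⟨e p, ⟨p, hp, rfl⟩, (e.image_connectedComponentIn hp)⟩

lemma compSet_of_preconnected {Y : Set EE} (h : IsPreconnected Y) (hne : Y.Nonempty) :
    compSet Y = {Y} := by
  ext C
  constructor
  · rintro ⟨p, hp, rfl⟩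
    simp [h.connectedComponentIn hp]
  · rintro rfl
    exact ⟨hne.choose, hne.choose_spec, (h.connectedComponentIn hne.choose_spec).symm⟩

lemma step_count (hρ0 : 0 < ρ) (hρ2 : ρ < 1 / 2) {ε : ℝ} (hε0 : 0 ≤ ε)
    (hsep : 2 * ε < 1 - 2 * ρ)
    (hfin : (compSet (cthickening (ε / ρ) (sierpinski ρ))).Finite) :
    (compSet (cthickening ε (sierpinski ρ))).Finite ∧
      (compSet (cthickening ε (sierpinski ρ))).ncard =
        3 * (compSet (cthickening (ε / ρ) (sierpinski ρ))).ncard := by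
  have hρ1 : ρ ≤ 1 := by linarith
  set Y := cthickening (ε / ρ) (sierpinski ρ) with hY
  set A0 := cthickening ε (hmt v0 ρ '' sierpinski ρ) with hA0
  set A1 := cthickening ε (hmt v1 ρ '' sierpinski ρ) with hA1
  set A2 := cthickening ε (hmt v2 ρ '' sierpinski ρ) with hA2
  have e0 : A0 = hmt v0 ρ '' Y := hmt_cthickening hρ0 (S_compact hρ0) hε0
  have e1 : A1 = hmt v1 ρ '' Y := hmt_cthickening hρ0 (S_compact hρ0) hε0
  have e2 : A2 = hmt v2 ρ '' Y := hmt_cthickening hρ0 (S_compact hρ0) hε0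
  have hdecomp : cthickening ε (sierpinski ρ) = A0 ∪ A1 ∪ A2 :=
    cthick_S_decomp hρ0 hρ1 ε
  -- compactness of the pieces
  have hP0 : IsCompact (hmt v0 ρ '' sierpinski ρ) :=
    (S_compact hρ0).image (hmtHomeo v0 ρ hρ0).continuous
  have hP1 : IsCompact (hmt v1 ρ '' sierpinski ρ) :=
    (S_compact hρ0).image (hmtHomeo v1 ρ hρ0).continuous
  have hP2 : IsCompact (hmt v2 ρ '' sierpinski ρ) :=
    (S_compact hρ0).image (hmtHomeo v2 ρ hρ0).continuous
  have hs01 : ∀ p ∈ hmt v0 ρ '' sierpinski ρ, ∀ q ∈ hmt v1 ρ '' sierpinski ρ,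
      1 - 2 * ρ ≤ dist p q := fun p hp q hq =>
    sep01 hρ0.le p (Set.image_mono S_subset_T hp) q (Set.image_mono S_subset_T hq)
  have hs02 : ∀ p ∈ hmt v0 ρ '' sierpinski ρ, ∀ q ∈ hmt v2 ρ '' sierpinski ρ,
      1 - 2 * ρ ≤ dist p q := fun p hp q hq =>
    sep02 hρ0.le p (Set.image_mono S_subset_T hp) q (Set.image_mono S_subset_T hq)
  have hs12 : ∀ p ∈ hmt v1 ρ '' sierpinski ρ, ∀ q ∈ hmt v2 ρ '' sierpinski ρ,
      1 - 2 * ρ ≤ dist p q := fun p hp q hq =>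
    sep12 hρ0.le p (Set.image_mono S_subset_T hp) q (Set.image_mono S_subset_T hq)
  have hd01 : Disjoint A0 A1 := disjoint_cthick_of_sep hP0 hP1 hε0 hs01 hsep
  have hd02 : Disjoint A0 A2 := disjoint_cthick_of_sep hP0 hP2 hε0 hs02 hsep
  have hd12 : Disjoint A1 A2 := disjoint_cthick_of_sep hP1 hP2 hε0 hs12 hsep
  have hcl0 : IsClosed A0 := isClosed_cthickening
  have hcl1 : IsClosed A1 := isClosed_cthickening
  have hcl2 : IsClosed A2 := isClosed_cthickening
  have hcomp : compSet (cthickening ε (sierpinski ρ)) = compSet A0 ∪ compSet A1 ∪ compSet A2 := by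
    rw [hdecomp, compSet_union (hcl0.union hcl1) hcl2 (Set.disjoint_union_left.mpr ⟨hd02, hd12⟩),
      compSet_union hcl0 hcl1 hd01]
  -- each piece's components
  have hi0 : compSet A0 = (Set.image (hmt v0 ρ)) '' compSet Y := by
    rw [e0]; exact compSet_image (hmtHomeo v0 ρ hρ0) Y
  have hi1 : compSet A1 = (Set.image (hmt v1 ρ)) '' compSet Y := by
    rw [e1]; exact compSet_image (hmtHomeo v1 ρ hρ0) Y
  have hi2 : compSet A2 = (Set.image (hmt v2 ρ)) '' compSet Y := by
    rw [e2]; exact compSet_image (hmtHomeo v2 ρ hρ0) Y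
  have hf0 : (compSet A0).Finite := by rw [hi0]; exact hfin.image _
  have hf1 : (compSet A1).Finite := by rw [hi1]; exact hfin.image _
  have hf2 : (compSet A2).Finite := by rw [hi2]; exact hfin.image _
  have hn0 : (compSet A0).ncard = (compSet Y).ncard := by
    rw [hi0]
    exact Set.ncard_image_of_injective _ (Set.image_injective.mpr (hmtHomeo v0 ρ hρ0).injective)
  have hn1 : (compSet A1).ncard = (compSet Y).ncard := by
    rw [hi1]
    exact Set.ncard_image_of_injective _ (Set.image_injective.mpr (hmtHomeo v1 ρ hρ0).injective)
  have hn2 : (compSet A2).ncard = (compSet Y).ncard := by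
    rw [hi2]
    exact Set.ncard_image_of_injective _ (Set.image_injective.mpr (hmtHomeo v2 ρ hρ0).injective)
  constructor
  · rw [hcomp]
    exact (hf0.union hf1).union hf2
  · rw [hcomp, Set.ncard_union_eq (Set.disjoint_union_left.mpr
      ⟨compSet_disjoint hd02, compSet_disjoint hd12⟩) (hf0.union hf1) hf2,
      Set.ncard_union_eq (compSet_disjoint hd01) hf0 hf1, hn0, hn1, hn2]
    ring

end GChunk


section HChunk
variable {ρ : ℝ}

lemma main_count (hρ0 : 0 < ρ) (hρ2 : ρ < 1 / 2) :
    ∀ k : ℕ, ∀ ε : ℝ, ρ ^ (k + 1) * (1 / 2 - ρ) ≤ ε → ε < ρ ^ k * (1 / 2 - ρ) →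
      (compSet (cthickening ε (sierpinski ρ))).Finite ∧
        (compSet (cthickening ε (sierpinski ρ))).ncard = 3 ^ (k + 1) := by
  intro k
  induction k with
  | zero =>
    intro ε hε1 hε2
    have hhalf : (0 : ℝ) < 1 / 2 - ρ := by linarith
    have hε0 : (0 : ℝ) < ε := lt_of_lt_of_le (by positivity) hε1
    have hsep : 2 * ε < 1 - 2 * ρ := by
      rw [pow_zero, one_mul] at hε2; linarith
    -- Y is connected
    have hYδ1 : 1 / 2 - ρ ≤ ε / ρ := by
      rw [le_div_iff₀ hρ0, pow_one] at *
      linarith [hε1]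
    have hYne : (cthickening (ε / ρ) (sierpinski ρ)).Nonempty :=
      S_nonempty.mono (self_subset_cthickening _)
    obtain ⟨n, hn⟩ := exists_pow_lt_of_lt_one (div_pos hε0 hρ0) (by linarith : ρ < 1)
    have hYconn : IsPreconnected (cthickening (ε / ρ) (sierpinski ρ)) :=
      conn_aux hρ0 (by linarith) n (ε / ρ) hYδ1 hn.le
    have hcY : compSet (cthickening (ε / ρ) (sierpinski ρ)) =
        {cthickening (ε / ρ) (sierpinski ρ)} := compSet_of_preconnected hYconn hYne
    have hfinY : (compSet (cthickening (ε / ρ) (sierpinski ρ))).Finite := by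
      rw [hcY]; exact Set.finite_singleton _
    obtain ⟨hfin, hcard⟩ := step_count hρ0 hρ2 hε0.le hsep hfinY
    refine ⟨hfin, ?_⟩
    rw [hcard, hcY, Set.ncard_singleton]
    norm_num
  | succ n ih =>
    intro ε hε1 hε2
    have hhalf : (0 : ℝ) < 1 / 2 - ρ := by linarith
    have hε0 : (0 : ℝ) < ε := lt_of_lt_of_le (by positivity) hε1
    have h1 : ρ ^ (n + 1) * (1 / 2 - ρ) ≤ ε / ρ := by
      rw [le_div_iff₀ hρ0]
      calc ρ ^ (n + 1) * (1 / 2 - ρ) * ρ = ρ ^ (n + 1 + 1) * (1 / 2 - ρ) := by ring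
        _ ≤ ε := hε1
    have h2 : ε / ρ < ρ ^ n * (1 / 2 - ρ) := by
      rw [div_lt_iff₀ hρ0]
      calc ε < ρ ^ (n + 1) * (1 / 2 - ρ) := hε2
        _ = ρ ^ n * (1 / 2 - ρ) * ρ := by ring
    obtain ⟨hfinY, hcardY⟩ := ih (ε / ρ) h1 h2
    have hsep : 2 * ε < 1 - 2 * ρ := by
      have hle : ρ ^ (n + 1) ≤ 1 := pow_le_one₀ hρ0.le (by linarith)
      nlinarith [hε2]
    obtain ⟨hfin, hcard⟩ := step_count hρ0 hρ2 hε0.le hsep hfinY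
    refine ⟨hfin, ?_⟩
    rw [hcard, hcardY]
    ring

end HChunk

theorem sierpinski_cthickening_component_count
    (ρ : ℝ) (hρ0 : 0 < ρ) (hρ : ρ < 1 / 2) (k : ℕ) (ε : ℝ)
    (hε1 : ρ ^ (k + 1) * (1 / 2 - ρ) ≤ ε) (hε2 : ε < ρ ^ k * (1 / 2 - ρ)) :
    {C : Set (EuclideanSpace ℝ (Fin 2)) |
        ∃ p ∈ Metric.cthickening ε (sierpinski ρ),
          C = connectedComponentIn (Metric.cthickening ε (sierpinski ρ)) p}.ncard
      = 3 ^ (k + 1) := by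
  exact (main_count hρ0 hρ k ε hε1 hε2).2
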